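/- Let M : Fin r → Fin c → ℝ be any matrix. Then min over probability distributions p on Fin r of (max over j of Σ_i p(i) M_{i,j}) equals max over probability distributions q on Fin c of (min over i of Σ_j q(j) M_{i,j}). -/

import Mathlib

open Finset Pointwise

theorem von_neumann_minimax (r c : ℕ) (hr : 0 < r) (hc : 0 < c)
    (M : Fin r → Fin c → ℝ) :
    (⨅ p : stdSimplex ℝ (Fin r), ⨆ j : Fin c, ∑ i, p.1 i * M i j) =
      ⨆ q : stdSimplex ℝ (Fin c), ⨅ i : Fin r, ∑ j, q.1 j * M i j := by
  haveI : Nonempty (Fin r) := ⟨⟨0, hr⟩⟩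
  haveI : Nonempty (Fin c) := ⟨⟨0, hc⟩⟩
  haveI : Nonempty (stdSimplex ℝ (Fin r)) :=
    ⟨⟨_, single_mem_stdSimplex ℝ (Classical.arbitrary (Fin r))⟩⟩
  haveI : Nonempty (stdSimplex ℝ (Fin c)) :=
    ⟨⟨_, single_mem_stdSimplex ℝ (Classical.arbitrary (Fin c))⟩⟩
  set C : ℝ := ∑ i, ∑ j, |M i j| with hCdef
  have habs : ∀ i j, |M i j| ≤ C := by
    intro i j
    calc |M i j| ≤ ∑ j', |M i j'| :=
          Finset.single_le_sum (f := fun j' => |M i j'|) (fun _ _ => abs_nonneg _) (mem_univ j)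
      _ ≤ C := Finset.single_le_sum (f := fun i => ∑ j, |M i j|)
          (fun _ _ => Finset.sum_nonneg fun _ _ => abs_nonneg _) (mem_univ i)
  -- bounds for mixed payoffs
  have hA_ub : ∀ p ∈ stdSimplex ℝ (Fin r), ∀ j, ∑ i, p i * M i j ≤ C := by
    intro p hp j
    calc ∑ i, p i * M i j ≤ ∑ i, p i * C :=
          Finset.sum_le_sum fun i _ =>
            mul_le_mul_of_nonneg_left ((le_abs_self _).trans (habs i j)) (hp.1 i)
      _ = C := by rw [← Finset.sum_mul, hp.2, one_mul]
  have hA_lb : ∀ p ∈ stdSimplex ℝ (Fin r), ∀ j, -C ≤ ∑ i, p i * M i j := by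
    intro p hp j
    calc -C = ∑ i, p i * (-C) := by rw [← Finset.sum_mul, hp.2, one_mul]
      _ ≤ ∑ i, p i * M i j :=
          Finset.sum_le_sum fun i _ =>
            mul_le_mul_of_nonneg_left ((neg_le_neg (habs i j)).trans (neg_abs_le _)) (hp.1 i)
  have hB_ub : ∀ q ∈ stdSimplex ℝ (Fin c), ∀ i, ∑ j, q j * M i j ≤ C := by
    intro q hq i
    calc ∑ j, q j * M i j ≤ ∑ j, q j * C :=
          Finset.sum_le_sum fun j _ =>
            mul_le_mul_of_nonneg_left ((le_abs_self _).trans (habs i j)) (hq.1 j)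
      _ = C := by rw [← Finset.sum_mul, hq.2, one_mul]
  -- the two values
  set L : ℝ := ⨅ p : stdSimplex ℝ (Fin r), ⨆ j : Fin c, ∑ i, p.1 i * M i j with hLdef
  set R : ℝ := ⨆ q : stdSimplex ℝ (Fin c), ⨅ i : Fin r, ∑ j, q.1 j * M i j with hRdef
  have hbddL : BddBelow (Set.range fun p : stdSimplex ℝ (Fin r) =>
      ⨆ j : Fin c, ∑ i, p.1 i * M i j) := by
    refine ⟨-C, ?_⟩
    rintro _ ⟨p, rfl⟩
    exact (hA_lb p.1 p.2 (Classical.arbitrary _)).trans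
      (le_ciSup (f := fun j : Fin c => ∑ i, p.1 i * M i j)
        (Set.finite_range _).bddAbove (Classical.arbitrary _))
  have hbddR : BddAbove (Set.range fun q : stdSimplex ℝ (Fin c) =>
      ⨅ i : Fin r, ∑ j, q.1 j * M i j) := by
    refine ⟨C, ?_⟩
    rintro _ ⟨q, rfl⟩
    exact (ciInf_le (Set.finite_range _).bddBelow (Classical.arbitrary _)).trans
      (hB_ub q.1 q.2 _)
  -- weak duality : R ≤ L
  have weak : R ≤ L := by
    refine ciSup_le fun q => le_ciInf fun p => ?_
    have h1 : (⨅ i : Fin r, ∑ j, q.1 j * M i j) ≤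
        ∑ i, p.1 i * ∑ j, q.1 j * M i j := by
      calc (⨅ i : Fin r, ∑ j, q.1 j * M i j)
          = ∑ i, p.1 i * (⨅ i' : Fin r, ∑ j, q.1 j * M i' j) := by
            rw [← Finset.sum_mul, p.2.2, one_mul]
        _ ≤ ∑ i, p.1 i * ∑ j, q.1 j * M i j :=
            Finset.sum_le_sum fun i _ =>
              mul_le_mul_of_nonneg_left (ciInf_le (Set.finite_range _).bddBelow i) (p.2.1 i)
    have hswap : ∑ i, p.1 i * ∑ j, q.1 j * M i j
        = ∑ j, q.1 j * ∑ i, p.1 i * M i j := by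
      simp_rw [Finset.mul_sum]
      rw [Finset.sum_comm]
      exact Finset.sum_congr rfl fun j _ => Finset.sum_congr rfl fun i _ => by ring
    have h2 : ∑ j, q.1 j * ∑ i, p.1 i * M i j ≤ ⨆ j : Fin c, ∑ i, p.1 i * M i j := by
      calc ∑ j, q.1 j * ∑ i, p.1 i * M i j
          ≤ ∑ j, q.1 j * (⨆ j' : Fin c, ∑ i, p.1 i * M i j') :=
            Finset.sum_le_sum fun j _ =>
              mul_le_mul_of_nonneg_left (le_ciSup (f := fun j' : Fin c => ∑ i, p.1 i * M i j')
                (Set.finite_range _).bddAbove j) (q.2.1 j)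
        _ = _ := by rw [← Finset.sum_mul, q.2.2, one_mul]
    exact h1.trans (hswap ▸ h2)
  -- strong direction : L ≤ R
  have strong : L ≤ R := by
    refine le_of_forall_pos_le_add fun ε hε => ?_
    set S : Set (Fin r → ℝ) :=
      {x | ∃ q ∈ stdSimplex ℝ (Fin c), ∀ i, x i ≤ ∑ j, q j * M i j} with hSdef
    -- columns belong to S
    have hcol : ∀ j, (fun i => M i j) ∈ S := by
      intro j
      refine ⟨Pi.single j 1, single_mem_stdSimplex ℝ j, fun i => ?_⟩
      rw [Finset.sum_eq_single j]
      · simp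
      · intro b _ hb; simp [Pi.single_apply, hb]
      · simp
    -- S is convex
    have hconv : Convex ℝ S := by
      rintro x ⟨q1, hq1, h1⟩ y ⟨q2, hq2, h2⟩ a b ha hb hab
      refine ⟨a • q1 + b • q2, convex_stdSimplex ℝ _ hq1 hq2 ha hb hab, fun i => ?_⟩
      have := add_le_add (mul_le_mul_of_nonneg_left (h1 i) ha)
        (mul_le_mul_of_nonneg_left (h2 i) hb)
      calc (a • x + b • y) i = a * x i + b * y i := rfl
        _ ≤ a * ∑ j, q1 j * M i j + b * ∑ j, q2 j * M i j := this
        _ = ∑ j, (a • q1 + b • q2) j * M i j := by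
            simp [Finset.mul_sum, ← Finset.sum_add_distrib, add_mul, mul_assoc]
    -- S is closed
    have hclosed : IsClosed S := by
      have hT : Continuous fun (q : Fin c → ℝ) (i : Fin r) => ∑ j, q j * M i j :=
        continuous_pi fun i =>
          continuous_finset_sum _ fun j _ => (continuous_apply j).mul continuous_const
      have hK : IsCompact ((fun (q : Fin c → ℝ) (i : Fin r) => ∑ j, q j * M i j) ''
          stdSimplex ℝ (Fin c)) := (isCompact_stdSimplex ℝ (Fin c)).image hT
      have hN : IsClosed {z : Fin r → ℝ | ∀ i, z i ≤ 0} := by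
        have : {z : Fin r → ℝ | ∀ i, z i ≤ 0} = ⋂ i, {z | z i ≤ 0} := by
          ext z; simp
        rw [this]
        exact isClosed_iInter fun i => isClosed_le (continuous_apply i) continuous_const
      have hSeq : S = ((fun (q : Fin c → ℝ) (i : Fin r) => ∑ j, q j * M i j) ''
          stdSimplex ℝ (Fin c)) + {z : Fin r → ℝ | ∀ i, z i ≤ 0} := by
        ext x
        constructor
        · rintro ⟨q, hq, hle⟩
          have hz : (x - fun i => ∑ j, q j * M i j) ∈ {z : Fin r → ℝ | ∀ i, z i ≤ 0} := by
            intro i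
            simpa using sub_nonpos.2 (hle i)
          have h := Set.add_mem_add (Set.mem_image_of_mem (fun (q : Fin c → ℝ) (i : Fin r) => ∑ j, q j * M i j) hq) hz
          simpa using h
        · rintro ⟨a, ⟨q, hq, rfl⟩, z, hz, rfl⟩
          refine ⟨q, hq, fun i => ?_⟩
          have := hz i
          simp only [Pi.add_apply]
          linarith
      rw [hSeq]
      exact hN.add_left_of_isCompact hK
    -- the point to separate
    have hx0 : (fun _ : Fin r => R + ε) ∉ S := by
      rintro ⟨q, hq, hle⟩
      have h1 : R + ε ≤ ⨅ i : Fin r, ∑ j, q j * M i j := le_ciInf fun i => hle i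
      have h2 : (⨅ i : Fin r, ∑ j, q j * M i j) ≤ R :=
        le_ciSup hbddR (⟨q, hq⟩ : stdSimplex ℝ (Fin c))
      linarith
    obtain ⟨f, u, hfu, hux⟩ := geometric_hahn_banach_closed_point hconv hclosed hx0
    set p : Fin r → ℝ := fun i => f (Pi.single i 1) with hpdef
    have hfx : ∀ x : Fin r → ℝ, f x = ∑ i, x i * p i := by
      intro x
      have hx : x = ∑ i, x i • (Pi.single i 1 : Fin r → ℝ) := by
        ext k
        simp [Pi.single_apply, Finset.sum_ite_eq']
      conv_lhs => rw [hx]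
      rw [map_sum]
      exact Finset.sum_congr rfl fun i _ => by rw [map_smul]; rfl
    -- p is nonnegative
    have hpnn : ∀ i, 0 ≤ p i := by
      intro i
      by_contra hneg
      push_neg at hneg
      set j0 : Fin c := Classical.arbitrary _
      set y0 : Fin r → ℝ := fun i => M i j0 with hy0
      have hy0S : y0 ∈ S := hcol j0
      have hfy0 : f y0 < u := hfu y0 hy0S
      set t : ℝ := (u - f y0 + 1) / (-p i) with htdef
      have ht : 0 < t := div_pos (by linarith) (by linarith)
      have hxS : y0 - t • (Pi.single i 1 : Fin r → ℝ) ∈ S := by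
        obtain ⟨q, hq, hle⟩ := hy0S
        refine ⟨q, hq, fun i' => ?_⟩
        have : (t • (Pi.single i 1 : Fin r → ℝ) : Fin r → ℝ) i' = t * (Pi.single i 1 : Fin r → ℝ) i' := rfl
        have hnn : 0 ≤ (t • (Pi.single i 1 : Fin r → ℝ) : Fin r → ℝ) i' := by
          rw [this]
          exact mul_nonneg ht.le (by by_cases h : i = i' <;> simp [Pi.single_apply, h])
        calc (y0 - t • (Pi.single i 1 : Fin r → ℝ)) i' = y0 i' - (t • (Pi.single i 1 : Fin r → ℝ) : Fin r → ℝ) i' := rfl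
          _ ≤ y0 i' := by linarith
          _ ≤ ∑ j, q j * M i' j := hle i'
      have hcalc : f (y0 - t • (Pi.single i 1 : Fin r → ℝ)) = f y0 - t * p i := by
        rw [map_sub, map_smul]; rfl
      have hcontr := hfu _ hxS
      rw [hcalc] at hcontr
      have : t * (-p i) = u - f y0 + 1 := by
        rw [htdef, div_mul_cancel₀]
        linarith
      nlinarith
    -- sum of p is positive
    have hsnn : 0 ≤ ∑ i, p i := Finset.sum_nonneg fun i _ => hpnn i
    have hfx0 : f (fun _ => R + ε) = (R + ε) * ∑ i, p i := by
      rw [hfx, Finset.mul_sum]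
    have hspos : 0 < ∑ i, p i := by
      rcases hsnn.lt_or_eq with h | h
      · exact h
      · exfalso
        have hz : ∀ i ∈ Finset.univ, p i = 0 :=
          (Finset.sum_eq_zero_iff_of_nonneg fun i _ => hpnn i).1 h.symm
        have h1 : f (fun i => M i (Classical.arbitrary _)) < u := hfu _ (hcol _)
        rw [hfx] at h1
        have h2 : u < 0 := by
          have := hux
          rw [hfx0, ← h] at this
          linarith
        have : (0:ℝ) < u := by
          have : ∑ i, M i (Classical.arbitrary _) * p i = 0 :=
            Finset.sum_eq_zero fun i hi => by rw [hz i hi, mul_zero]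
          linarith
        linarith
    -- normalized strategy
    set p' : Fin r → ℝ := fun i => p i / ∑ i, p i with hp'def
    have hp'mem : p' ∈ stdSimplex ℝ (Fin r) := by
      constructor
      · intro i; exact div_nonneg (hpnn i) hsnn
      · rw [← Finset.sum_div, div_self hspos.ne']
    have hju : ∀ j, ∑ i, p' i * M i j ≤ R + ε := by
      intro j
      have h1 : f (fun i => M i j) < u := hfu _ (hcol j)
      rw [hfx] at h1
      have h2 : u < (R + ε) * ∑ i, p i := by rw [← hfx0]; exact hux
      have h3 : ∑ i, p i * M i j < (R + ε) * ∑ i, p i := by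
        have : ∑ i, p i * M i j = ∑ i, M i j * p i :=
          Finset.sum_congr rfl fun i _ => mul_comm _ _
        linarith [this ▸ h1.trans h2]
      calc ∑ i, p' i * M i j = (∑ i, p i * M i j) / ∑ i, p i := by
            rw [Finset.sum_div]
            exact Finset.sum_congr rfl fun i _ => div_mul_eq_mul_div _ _ _
        _ ≤ R + ε := by rw [div_le_iff₀ hspos]; exact h3.le
    have hgle : (⨆ j : Fin c, ∑ i, p' i * M i j) ≤ R + ε := ciSup_le hju
    exact (ciInf_le hbddL (⟨p', hp'mem⟩ : stdSimplex ℝ (Fin r))).trans hgle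
  exact le_antisymm strong weak
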